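/- arXiv:1104.4136 — 6 statements merged into one kernel-verified Lean document; each statement's English description precedes it below -/
import Mathlib

section
/- Let p be an odd prime, let ι be a finite index set, and let a, b : ι → ℕ be functions such that ∑_{j∈ι} a(j) = ∑_{j∈ι} b(j) ≤ 2p − 2 and such that p divides a(j) − b(j) (as integers) for every j ∈ ι. Then either a = b, or there exist two distinct indices j₁ ≠ j₂ such that a(j₁) = b(j₁) + p, b(j₂) = a(j₂) + p, and a(j) = b(j) for every j ∉ {j₁, j₂}. -/
lemma two_big_aux {ι : Type*} [Fintype ι] [DecidableEq ι] {f : ι → ℕ} {p : ℕ} {j j' : ι}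
    (h : j ≠ j') (h1 : p ≤ f j) (h2 : p ≤ f j') : 2 * p ≤ ∑ i, f i := by
  have hpair : f j + f j' = ∑ i ∈ ({j, j'} : Finset ι), f i :=
    (Finset.sum_pair h).symm
  have hsub : ∑ i ∈ ({j, j'} : Finset ι), f i ≤ ∑ i, f i :=
    Finset.sum_le_sum_of_subset (Finset.subset_univ _)
  omega

/-- Let p be an odd prime, ι a finite index set, a, b : ι → ℕ with
∑ a = ∑ b ≤ 2p − 2 and p ∣ a j − b j (in ℤ) for every j.  Then either a = b, or
there exist distinct indices j₁ ≠ j₂ with a j₁ = b j₁ + p, b j₂ = a j₂ + p, and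
a j = b j for every j ∉ {j₁, j₂}. -/
theorem stmt0 {ι : Type*} [Fintype ι] (p : ℕ) (hp : p.Prime) (hodd : Odd p)
    (a b : ι → ℕ)
    (hsum : ∑ j, a j = ∑ j, b j)
    (hle : ∑ j, a j ≤ 2 * p - 2)
    (hdvd : ∀ j, (p : ℤ) ∣ (a j : ℤ) - (b j : ℤ)) :
    a = b ∨
      ∃ j₁ j₂, j₁ ≠ j₂ ∧ a j₁ = b j₁ + p ∧ b j₂ = a j₂ + p ∧
        ∀ j, j ≠ j₁ → j ≠ j₂ → a j = b j := by
  classical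
  have hp2 : 2 ≤ p := hp.two_le
  have hp3 : 3 ≤ p := by
    rcases hodd with ⟨k, hk⟩; omega
  -- bounds on individual values
  have ha : ∀ j, a j ≤ 2 * p - 2 := fun j =>
    le_trans (Finset.single_le_sum (fun i _ => Nat.zero_le _) (Finset.mem_univ j)) hle
  have hb : ∀ j, b j ≤ 2 * p - 2 := fun j =>
    le_trans (Finset.single_le_sum (fun i _ => Nat.zero_le _) (Finset.mem_univ j))
      (hsum ▸ hle)
  -- each difference is -p, 0, or p
  have key : ∀ j, a j + p = b j ∨ a j = b j ∨ a j = b j + p := by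
    intro j
    obtain ⟨k, hk⟩ := hdvd j
    have h1 := ha j
    have h2 := hb j
    have hk1 : k = -1 ∨ k = 0 ∨ k = 1 := by
      rcases lt_trichotomy k 0 with h | h | h
      · left
        by_contra hne
        have : k ≤ -2 := by omega
        have : (p : ℤ) * k ≤ (p : ℤ) * (-2) := by
          apply mul_le_mul_of_nonneg_left this (by positivity)
        omega
      · right; left; exact h
      · right; right
        by_contra hne
        have : 2 ≤ k := by omega
        have : (p : ℤ) * 2 ≤ (p : ℤ) * k := by
          apply mul_le_mul_of_nonneg_left this (by positivity)
        omega
    rcases hk1 with h | h | h <;> subst h <;> [left; (right; left); (right; right)] <;> omega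
  -- sum of differences is zero
  have hsZ : ∑ j, ((a j : ℤ) - (b j : ℤ)) = 0 := by
    have h := congrArg (Nat.cast : ℕ → ℤ) hsum
    push_cast at h
    rw [Finset.sum_sub_distrib, h]
    ring
  by_cases hall : ∀ j, a j = b j
  · left; funext j; exact hall j
  · right
    push_neg at hall
    obtain ⟨j₀, hj₀⟩ := hall
    -- j₀ has difference ±p ; find the companion index
    have exP : (∃ j, a j = b j + p) ∧ (∃ j, b j = a j + p) := by
      constructor
      · by_contra hno
        push_neg at hno
        -- all differences ≤ 0, sum 0 ⇒ all = 0
        have hnonpos : ∀ j ∈ Finset.univ, (0:ℤ) ≤ (b j : ℤ) - (a j : ℤ) := by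
          intro j _
          rcases key j with h | h | h
          · omega
          · omega
          · exact absurd h (hno j)
        have hsZ' : ∑ j, ((b j : ℤ) - (a j : ℤ)) = 0 := by
          have := hsZ
          rw [← neg_eq_zero, ← Finset.sum_neg_distrib] at this
          simpa using this
        have := (Finset.sum_eq_zero_iff_of_nonneg hnonpos).mp hsZ' j₀ (Finset.mem_univ _)
        exact hj₀ (by omega)
      · by_contra hno
        push_neg at hno
        have hnonneg : ∀ j ∈ Finset.univ, (0:ℤ) ≤ (a j : ℤ) - (b j : ℤ) := by
          intro j _
          rcases key j with h | h | h
          · exact absurd (by omega : b j = a j + p) (hno j)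
          · omega
          · omega
        have := (Finset.sum_eq_zero_iff_of_nonneg hnonneg).mp hsZ j₀ (Finset.mem_univ _)
        exact hj₀ (by omega)
    obtain ⟨⟨j₁, hj₁⟩, ⟨j₂, hj₂⟩⟩ := exP
    have hne : j₁ ≠ j₂ := by
      intro h; subst h; omega
    refine ⟨j₁, j₂, hne, hj₁, hj₂, ?_⟩
    intro j hne1 hne2
    rcases key j with h | h | h
    · -- b j = a j + p and b j₂ = a j₂ + p with j ≠ j₂ : sum of b too big
      exfalso
      have := two_big_aux hne2 (f := b) (p := p) (by omega) (by omega)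
      omega
    · exact h
    · exfalso
      have := two_big_aux hne1 (f := a) (p := p) (by omega) (by omega)
      omega
end

section
/- Let p be an odd prime and let a, b : Fin ((p−1)/2) → ℕ satisfy: (i) ∑ a(j) = ∑ b(j) ≤ 2p − 2; (ii) p divides a(j) − b(j) (as integers) for every j; (iii) all the values are mutually congruent modulo p, i.e. a(j) ≡ a(j′) ≡ b(j′′) (mod p) for all indices j, j′, j′′. Then either a = b, or there exist c ∈ {0, 1} and two distinct indices j₁ ≠ j₂ such that a(j₁) = b(j₂) = p + c, b(j₁) = a(j₂) = c, a(j) = b(j) = c for every j ∉ {j₁, j₂}, and ∑ a(j) = c·(p−1)/2 + p. -/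
private lemma modeq_aux {p x y : ℕ} (h : (p:ℤ) ∣ (x:ℤ) - (y:ℤ)) : x % p = y % p := by
  have h1 : Int.ModEq p y x := Int.modEq_iff_dvd.mpr h
  have h2 : ((x % p : ℕ) : ℤ) = ((y % p : ℕ) : ℤ) := by
    rw [Int.natCast_mod, Int.natCast_mod]; exact h1.symm
  exact_mod_cast h2

private lemma tri_aux {p x c : ℕ} (hx : x % p = c) (hp : 0 < p) :
    x = c ∨ x = p + c ∨ 2 * p + c ≤ x := by
  have h := Nat.div_add_mod x p
  obtain ⟨q, hq⟩ : ∃ q, x / p = q := ⟨_, rfl⟩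
  rw [hq] at h
  match q, h with
  | 0, h => left; omega
  | 1, h => right; left; omega
  | (q+2), h =>
    right; right
    have : p * 2 ≤ p * (q + 2) := Nat.mul_le_mul_left p (by omega)
    omega

/-- Let p be an odd prime and a, b : Fin ((p−1)/2) → ℕ with
(i) ∑ a = ∑ b ≤ 2p − 2; (ii) p ∣ a j − b j (in ℤ) for every j; (iii) all
values mutually congruent mod p.  Then either a = b, or there exist c ∈ {0,1}
and distinct indices j₁ ≠ j₂ with a j₁ = b j₂ = p + c, b j₁ = a j₂ = c,
a j = b j = c for j ∉ {j₁, j₂}, and ∑ a = c·(p−1)/2 + p. -/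
theorem stmt1 (p : ℕ) (hp : p.Prime) (hodd : Odd p)
    (a b : Fin ((p - 1) / 2) → ℕ)
    (hsum : ∑ j, a j = ∑ j, b j)
    (hle : ∑ j, a j ≤ 2 * p - 2)
    (hdvd : ∀ j, (p : ℤ) ∣ (a j : ℤ) - (b j : ℤ))
    (hconga : ∀ j j', (p : ℤ) ∣ (a j : ℤ) - (a j' : ℤ))
    (hcongab : ∀ j j', (p : ℤ) ∣ (a j : ℤ) - (b j' : ℤ)) :
    a = b ∨
      ∃ c, (c = 0 ∨ c = 1) ∧
        ∃ j₁ j₂, j₁ ≠ j₂ ∧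
          a j₁ = p + c ∧ b j₂ = p + c ∧ b j₁ = c ∧ a j₂ = c ∧
          (∀ j, j ≠ j₁ → j ≠ j₂ → a j = c ∧ b j = c) ∧
          ∑ j, a j = c * ((p - 1) / 2) + p := by
  by_cases hab : a = b
  · exact Or.inl hab
  right
  have hp3 : 3 ≤ p := by
    obtain ⟨k, hk⟩ := hodd
    have := hp.two_le
    omega
  have hpos : 0 < p := by omega
  have h2n : 2 * ((p - 1) / 2) = p - 1 := by
    obtain ⟨k, hk⟩ := hodd; omega
  -- a ≠ b pointwise somewhere
  obtain ⟨j₀, hj₀⟩ : ∃ j₀, a j₀ ≠ b j₀ := by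
    by_contra h; push_neg at h; exact hab (funext h)
  -- find j₁ with a j₁ > b j₁
  obtain ⟨j₁, hj₁⟩ : ∃ j₁, b j₁ < a j₁ := by
    by_contra h; push_neg at h
    have hlt : ∑ j, a j < ∑ j, b j :=
      Finset.sum_lt_sum (fun j _ => h j)
        ⟨j₀, Finset.mem_univ _, lt_of_le_of_ne (h j₀) hj₀⟩
    omega
  -- find j₂ with b j₂ > a j₂
  obtain ⟨j₂, hj₂⟩ : ∃ j₂, a j₂ < b j₂ := by
    by_contra h; push_neg at h
    have hlt : ∑ j, b j < ∑ j, a j :=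
      Finset.sum_lt_sum (fun j _ => h j)
        ⟨j₀, Finset.mem_univ _, lt_of_le_of_ne (h j₀) (Ne.symm hj₀)⟩
    omega
  set c := a j₁ % p with hc
  have ha_mod : ∀ j, a j % p = c := fun j => modeq_aux (hconga j j₁)
  have hb_mod : ∀ j, b j % p = c := fun j => (modeq_aux (hcongab j₁ j)).symm
  have hale : ∀ j, c ≤ a j := fun j => le_of_eq_of_le (ha_mod j).symm (Nat.mod_le _ _)
  have hble : ∀ j, c ≤ b j := fun j => le_of_eq_of_le (hb_mod j).symm (Nat.mod_le _ _)
  -- gaps of size p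
  have hg1 : p + b j₁ ≤ a j₁ := by
    have h1 : (p:ℤ) ≤ (a j₁ : ℤ) - (b j₁ : ℤ) :=
      Int.le_of_dvd (by omega) (hdvd j₁)
    omega
  have hg2 : p + a j₂ ≤ b j₂ := by
    have hd : (p:ℤ) ∣ (b j₂ : ℤ) - (a j₂ : ℤ) := by
      simpa [neg_sub] using dvd_neg.mpr (hdvd j₂)
    have h1 : (p:ℤ) ≤ (b j₂ : ℤ) - (a j₂ : ℤ) :=
      Int.le_of_dvd (by omega) hd
    omega
  have hS1 : a j₁ ≤ ∑ j, a j :=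
    Finset.single_le_sum (fun _ _ => Nat.zero_le _) (Finset.mem_univ _)
  have hS2 : b j₂ ≤ ∑ j, b j :=
    Finset.single_le_sum (fun _ _ => Nat.zero_le _) (Finset.mem_univ _)
  -- a j₁ = p + c
  have haj1 : a j₁ = p + c := by
    rcases tri_aux (ha_mod j₁) hpos with h | h | h
    · have := hble j₁; omega
    · exact h
    · omega
  -- b j₂ = p + c
  have hbj2 : b j₂ = p + c := by
    rcases tri_aux (hb_mod j₂) hpos with h | h | h
    · have := hale j₂; omega
    · exact h
    · omega
  -- j₁ ≠ j₂
  have hj12 : j₁ ≠ j₂ := by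
    rintro rfl; omega
  -- other a values are c
  have ha_rest : ∀ j, j ≠ j₁ → a j = c := by
    intro j hj
    rcases tri_aux (ha_mod j) hpos with h | h | h
    · exact h
    all_goals
      exfalso
      have hpair : a j₁ + a j ≤ ∑ j, a j := by
        have hsub : ({j₁, j} : Finset _).sum a ≤ Finset.univ.sum a :=
          Finset.sum_le_sum_of_subset (Finset.subset_univ _)
        rwa [Finset.sum_pair (Ne.symm hj)] at hsub
      omega
  -- other b values are c
  have hb_rest : ∀ j, j ≠ j₂ → b j = c := by
    intro j hj
    rcases tri_aux (hb_mod j) hpos with h | h | h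
    · exact h
    all_goals
      exfalso
      have hpair : b j₂ + b j ≤ ∑ j, b j := by
        have hsub : ({j₂, j} : Finset _).sum b ≤ Finset.univ.sum b :=
          Finset.sum_le_sum_of_subset (Finset.subset_univ _)
        rwa [Finset.sum_pair (Ne.symm hj)] at hsub
      omega
  -- sum split
  have hNpos : 0 < (p - 1) / 2 := Fin.pos j₁
  obtain ⟨m, hm⟩ : ∃ m, (p - 1) / 2 = m + 1 := ⟨(p - 1) / 2 - 1, by omega⟩
  have hsplit : ∑ j, a j = a j₁ + ∑ j ∈ Finset.univ.erase j₁, a j :=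
    (Finset.add_sum_erase _ _ (Finset.mem_univ _)).symm
  have hsum_erase : ∑ j ∈ Finset.univ.erase j₁, a j = m * c := by
    rw [Finset.sum_congr rfl (fun j hj => ha_rest j (Finset.ne_of_mem_erase hj))]
    rw [Finset.sum_const, Finset.card_erase_of_mem (Finset.mem_univ _),
      Finset.card_univ, Fintype.card_fin, hm, smul_eq_mul]
    simp
  -- c ≤ 1
  have hc1 : c ≤ 1 := by
    by_contra hc2
    push_neg at hc2
    have h1 : m * 2 ≤ m * c := Nat.mul_le_mul_left m (by omega)
    omega
  -- final sum value
  have hfinal : ∑ j, a j = c * ((p - 1) / 2) + p := by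
    have hr : c * ((p - 1) / 2) = m * c + c := by rw [hm]; ring
    omega
  exact ⟨c, by omega, j₁, j₂, hj12, haj1, hbj2, hb_rest j₁ hj12,
    ha_rest j₂ (Ne.symm hj12),
    fun j h1 h2 => ⟨ha_rest j h1, hb_rest j h2⟩, hfinal⟩
end

section
/- Let p be an odd prime and let a, b : ZMod p → ℕ be functions such that: a(0) = b(0) = 0; a(−j) = a(j) and b(−j) = b(j) for all j; ∑_{j ∈ ZMod p} a(j) = ∑_{j ∈ ZMod p} b(j) ≤ 4p − 4; p divides a(j) − b(j) (as integers) for every j; and a(j) ≡ b(j′) (mod p) for all nonzero j, j′. Then there exists a nonzero s ∈ ZMod p such that a(j) = b(s·j) for every j ∈ ZMod p. -/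
open Finset

private lemma neg_ne_self' {p : ℕ} [hp : Fact p.Prime] (hodd : Odd p) {j : ZMod p}
    (hj : j ≠ 0) : -j ≠ j := by
  intro h
  have h2 : (2 : ZMod p) ≠ 0 := by
    have hp2 : p ≠ 2 := by
      rintro rfl
      obtain ⟨k, hk⟩ := hodd
      omega
    have : ((2 : ℕ) : ZMod p) ≠ 0 := by
      rw [Ne, ZMod.natCast_eq_zero_iff]
      intro hd
      exact hp2 ((Nat.prime_dvd_prime_iff_eq hp.out Nat.prime_two).mp hd)
    simpa using this
  apply hj
  have : (2 : ZMod p) * j = 0 := by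
    rw [two_mul]
    linear_combination -h
  exact (mul_eq_zero.mp this).resolve_left h2 |>.symm ▸ rfl

private lemma struct' {p : ℕ} [hp : Fact p.Prime] (hodd : Odd p) (m : ZMod p → ℕ)
    (hsym : ∀ j, m (-j) = m j)
    (hle3 : ∑ j ∈ Finset.univ.erase (0 : ZMod p), m j ≤ 3) :
    ((∑ j ∈ Finset.univ.erase (0 : ZMod p), m j) = 0 ∧ ∀ j, j ≠ 0 → m j = 0) ∨
    ((∑ j ∈ Finset.univ.erase (0 : ZMod p), m j) = 2 ∧
      ∃ j0 : ZMod p, j0 ≠ 0 ∧ m j0 = 1 ∧ ∀ j, j ≠ 0 → j ≠ j0 → j ≠ -j0 → m j = 0) := by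
  by_cases hz : ∀ j : ZMod p, j ≠ 0 → m j = 0
  · left
    refine ⟨Finset.sum_eq_zero fun j hj => hz j (Finset.mem_erase.mp hj).1, hz⟩
  · right
    push_neg at hz
    obtain ⟨j0, hj0, hm0⟩ := hz
    have hneg : j0 ≠ -j0 := fun h => (neg_ne_self' hodd hj0) h.symm
    have hpair : ({j0, -j0} : Finset (ZMod p)) ⊆ Finset.univ.erase 0 := by
      intro x hx
      simp only [Finset.mem_insert, Finset.mem_singleton] at hx
      rcases hx with rfl | rfl <;> simp [hj0, neg_ne_zero.mpr hj0]
    have hps : ∑ j ∈ ({j0, -j0} : Finset (ZMod p)), m j = 2 * m j0 := by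
      rw [Finset.sum_pair hneg, hsym, two_mul]
    have hsplit : ∑ j ∈ Finset.univ.erase (0 : ZMod p) \ {j0, -j0}, m j +
        ∑ j ∈ ({j0, -j0} : Finset (ZMod p)), m j =
        ∑ j ∈ Finset.univ.erase (0 : ZMod p), m j := Finset.sum_sdiff hpair
    have hm01 : m j0 = 1 := by omega
    by_cases hz' : ∀ j ∈ Finset.univ.erase (0 : ZMod p) \ {j0, -j0}, m j = 0
    · have h0 : ∑ j ∈ Finset.univ.erase (0 : ZMod p) \ {j0, -j0}, m j = 0 :=
        Finset.sum_eq_zero hz'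
      refine ⟨by omega, j0, hj0, hm01, fun j h1 h2 h3 => ?_⟩
      apply hz'
      simp [Finset.mem_sdiff, h1, h2, h3]
    · exfalso
      push_neg at hz'
      obtain ⟨j1, hj1mem, hm1⟩ := hz'
      rw [Finset.mem_sdiff, Finset.mem_erase, Finset.mem_insert, Finset.mem_singleton,
        not_or] at hj1mem
      obtain ⟨⟨hj1, -⟩, hj1a, hj1b⟩ := hj1mem
      have hneg1 : j1 ≠ -j1 := fun h => (neg_ne_self' hodd hj1) h.symm
      have hpair1 : ({j1, -j1} : Finset (ZMod p)) ⊆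
          Finset.univ.erase (0 : ZMod p) \ {j0, -j0} := by
        intro x hx
        simp only [Finset.mem_insert, Finset.mem_singleton] at hx
        rcases hx with rfl | rfl
        · simp [Finset.mem_sdiff, hj1, hj1a, hj1b]
        · have h1 : -j1 ≠ j0 := fun h => hj1b (by rw [← h, neg_neg])
          have h2 : -j1 ≠ -j0 := fun h => hj1a (neg_injective h)
          simp [Finset.mem_sdiff, neg_ne_zero.mpr hj1, h1, h2]
      have hps1 : ∑ j ∈ ({j1, -j1} : Finset (ZMod p)), m j = 2 * m j1 := by
        rw [Finset.sum_pair hneg1, hsym, two_mul]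
      have := Finset.sum_le_sum_of_subset (f := m) hpair1
      omega

/-- Let p be an odd prime and a, b : ZMod p → ℕ with a 0 = b 0 = 0,
a and b symmetric under negation, ∑ a = ∑ b ≤ 4p − 4, p ∣ a j − b j (in ℤ) for
all j, and a j ≡ b j′ (mod p) for all nonzero j, j′.  Then there is a nonzero
s ∈ ZMod p with a j = b (s·j) for every j. -/
theorem stmt2 (p : ℕ) [hp : Fact p.Prime] (hodd : Odd p)
    (a b : ZMod p → ℕ)
    (ha0 : a 0 = 0) (hb0 : b 0 = 0)
    (hasym : ∀ j, a (-j) = a j) (hbsym : ∀ j, b (-j) = b j)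
    (hsum : ∑ j, a j = ∑ j, b j)
    (hle : ∑ j, a j ≤ 4 * p - 4)
    (hdvd : ∀ j, (p : ℤ) ∣ (a j : ℤ) - (b j : ℤ))
    (hcong : ∀ j j', j ≠ 0 → j' ≠ 0 → (p : ℤ) ∣ (a j : ℤ) - (b j' : ℤ)) :
    ∃ s : ZMod p, s ≠ 0 ∧ ∀ j, a j = b (s * j) := by
  have hpp := hp.out
  have hp0 : 0 < p := hpp.pos
  have hp1 : 1 < p := hpp.one_lt
  haveI : NeZero p := ⟨hp0.ne'⟩
  have h1 : (1 : ZMod p) ≠ 0 := one_ne_zero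
  set r := a 1 % p with hr
  -- all nonzero values are ≡ r mod p
  have hamod : ∀ j : ZMod p, j ≠ 0 → a j % p = r := by
    intro j hj
    have h1d : (p : ℤ) ∣ (a j : ℤ) - (b 1 : ℤ) := hcong j 1 hj h1
    have h2d : (p : ℤ) ∣ (a 1 : ℤ) - (b 1 : ℤ) := hdvd 1
    have h3d : (p : ℤ) ∣ (a 1 : ℤ) - (a j : ℤ) := by
      have := dvd_sub h2d h1d
      simpa using this
    exact Nat.modEq_iff_dvd.mpr h3d
  have hbmod : ∀ j : ZMod p, j ≠ 0 → b j % p = r := by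
    intro j hj
    have h1d : (p : ℤ) ∣ (a 1 : ℤ) - (b j : ℤ) := hcong 1 j h1 hj
    exact Nat.modEq_iff_dvd.mpr h1d
  -- sum formula
  have hcard : (Finset.univ.erase (0 : ZMod p)).card = p - 1 := by
    rw [Finset.card_erase_of_mem (Finset.mem_univ _), Finset.card_univ, ZMod.card]
  have hsumf : ∀ f : ZMod p → ℕ, f 0 = 0 → (∀ j : ZMod p, j ≠ 0 → f j % p = r) →
      ∑ j, f j = p * (∑ j ∈ Finset.univ.erase (0 : ZMod p), f j / p) + (p - 1) * r := by
    intro f hf0 hfm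
    have h0 : ∑ j, f j = ∑ j ∈ Finset.univ.erase (0 : ZMod p), f j := by
      rw [← Finset.add_sum_erase Finset.univ f (Finset.mem_univ (0 : ZMod p)), hf0, zero_add]
    rw [h0]
    have h1' : ∑ j ∈ Finset.univ.erase (0 : ZMod p), f j =
        ∑ j ∈ Finset.univ.erase (0 : ZMod p), (p * (f j / p) + r) := by
      apply Finset.sum_congr rfl
      intro j hj
      have := Nat.div_add_mod (f j) p
      rw [hfm j (Finset.mem_erase.mp hj).1] at this
      omega
    rw [h1', Finset.sum_add_distrib, ← Finset.mul_sum, Finset.sum_const, hcard, smul_eq_mul]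
  have hSa := hsumf a ha0 hamod
  have hSb := hsumf b hb0 hbmod
  obtain ⟨Ma, hMa⟩ : ∃ M, (∑ j ∈ Finset.univ.erase (0 : ZMod p), a j / p) = M := ⟨_, rfl⟩
  obtain ⟨Mb, hMb⟩ : ∃ M, (∑ j ∈ Finset.univ.erase (0 : ZMod p), b j / p) = M := ⟨_, rfl⟩
  rw [hMa] at hSa
  rw [hMb] at hSb
  have hMab : Ma = Mb := by
    have : p * Ma = p * Mb := by omega
    exact Nat.eq_of_mul_eq_mul_left hp0 this
  have hMa3 : Ma ≤ 3 := by
    have h4 : p * Ma < p * 4 := by omega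
    have := Nat.lt_of_mul_lt_mul_left h4
    omega
  have hval : ∀ (f : ZMod p → ℕ), (∀ j : ZMod p, j ≠ 0 → f j % p = r) →
      ∀ j : ZMod p, j ≠ 0 → ∀ k : ℕ, f j / p = k → f j = p * k + r := by
    intro f hfm j hj k hk
    have := Nat.div_add_mod (f j) p
    rw [hk, hfm j hj] at this
    omega
  have hMa3' : (∑ j ∈ Finset.univ.erase (0 : ZMod p), a j / p) ≤ 3 := by
    rw [hMa]; exact hMa3
  rcases struct' hodd (fun j => a j / p) (fun j => by simp [hasym]) hMa3' with
    ⟨hA0, hAz⟩ | ⟨hA2, j0, hj0, hmj0, hAo⟩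
  · -- both constant, take s = 1
    have hA0' : Ma = 0 := by rw [← hMa]; exact hA0
    have hB0 : Mb = 0 := by omega
    have hBz : ∀ j : ZMod p, j ≠ 0 → b j / p = 0 := by
      intro j hj
      have hle' : b j / p ≤ Mb := by
        rw [← hMb]
        exact Finset.single_le_sum (f := fun j => b j / p) (fun i _ => Nat.zero_le _)
          (by simp [hj])
      exact Nat.le_zero.mp (hB0 ▸ hle')
    refine ⟨1, one_ne_zero, fun j => ?_⟩
    rw [one_mul]
    by_cases hj : j = 0
    · rw [hj, ha0, hb0]
    · have e1 := hval a hamod j hj 0 (hAz j hj)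
      have e2 := hval b hbmod j hj 0 (hBz j hj)
      omega
  · -- pair case
    have hA2' : Ma = 2 := by rw [← hMa]; exact hA2
    have hB2 : Mb = 2 := by omega
    have hMb3' : (∑ j ∈ Finset.univ.erase (0 : ZMod p), b j / p) ≤ 3 := by
      rw [hMb]; omega
    rcases struct' hodd (fun j => b j / p) (fun j => by simp [hbsym]) hMb3' with
      ⟨hB0, _⟩ | ⟨_, j1, hj1, hnj1, hBo⟩
    · have hB0' : Mb = 0 := by rw [← hMb]; exact hB0
      omega
    · have hs : j1 * j0⁻¹ ≠ 0 := mul_ne_zero hj1 (inv_ne_zero hj0)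
      have hsj0 : (j1 * j0⁻¹) * j0 = j1 := by
        rw [mul_assoc, inv_mul_cancel₀ hj0, mul_one]
      have e1 := hval a hamod j0 hj0 1 hmj0
      have e2 := hval b hbmod j1 hj1 1 hnj1
      refine ⟨j1 * j0⁻¹, hs, fun j => ?_⟩
      by_cases hj : j = 0
      · rw [hj, mul_zero, ha0, hb0]
      · by_cases hjj0 : j = j0
        · subst hjj0
          rw [hsj0]
          omega
        · by_cases hjn0 : j = -j0
          · subst hjn0
            have hn : (j1 * j0⁻¹) * -j0 = -j1 := by rw [mul_neg, hsj0]
            rw [hn, hbsym, hasym]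
            omega
          · have hsj : (j1 * j0⁻¹) * j ≠ 0 := mul_ne_zero hs hj
            have hsj1 : (j1 * j0⁻¹) * j ≠ j1 := by
              intro h
              exact hjj0 (mul_left_cancel₀ hs (h.trans hsj0.symm))
            have hsj1' : (j1 * j0⁻¹) * j ≠ -j1 := by
              intro h
              apply hjn0
              have h2 : (j1 * j0⁻¹) * j = (j1 * j0⁻¹) * (-j0) := by
                rw [mul_neg, hsj0, h]
              exact mul_left_cancel₀ hs h2
            have e3 := hval a hamod j hj 0 (hAo j hj hjj0 hjn0)
            have e4 := hval b hbmod _ hsj 0 (hBo _ hsj hsj1 hsj1')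
            omega
end

section
/- Let p be an odd prime and let k ≥ 1 be a natural number. Let N be the numerator of the rational number B_{k(p−1)} / (2k(p−1)) written in lowest terms, where B_{k(p−1)} is the k(p−1)-st Bernoulli number (the index k(p−1) is even, so the two sign conventions for Bernoulli numbers agree). Then p does not divide the integer (2^{k(p−1)−1} − 1) · N. -/
open Finset

-- valuation bound: v_p(j) + 2 ≤ j for j ≥ 2, p ≥ 3
lemma aux_val_le (p j : ℕ) [hp : Fact p.Prime] (hp3 : 3 ≤ p) (hj : 2 ≤ j) :
    padicValNat p j + 2 ≤ j := by
  set v := padicValNat p j with hv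
  have hdvd : p ^ v ∣ j := pow_padicValNat_dvd
  have hle : p ^ v ≤ j := Nat.le_of_dvd (by omega) hdvd
  have h3 : 3 ^ v ≤ j := le_trans (Nat.pow_le_pow_left hp3 v) hle
  rcases Nat.eq_zero_or_pos v with h0 | h1
  · omega
  · have : v - 1 < 3 ^ (v - 1) := Nat.lt_pow_self (by norm_num)
    have h31 : 3 ^ v = 3 * 3 ^ (v-1) := by
      conv_lhs => rw [show v = (v-1) + 1 by omega]
      ring
    omega

lemma aux_pow_div (p j : ℕ) [hp : Fact p.Prime] (hp3 : 3 ≤ p) (hj : 2 ≤ j) :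
    padicNorm p ((p:ℚ)^j / j) ≤ ((p:ℚ)^2)⁻¹ := by
  have hp1 : (1:ℚ) < p := by exact_mod_cast hp.out.one_lt
  have hj0 : (j:ℚ) ≠ 0 := by positivity
  rw [padicNorm.div, padicNorm.eq_zpow_of_nonzero (by positivity),
    padicNorm.eq_zpow_of_nonzero hj0]
  rw [padicValRat.of_nat, show ((p:ℚ)^j : ℚ) = ((p^j : ℕ) : ℚ) by push_cast; ring]
  rw [padicValRat.of_nat, padicValNat.prime_pow]
  have hpne : (p:ℚ) ≠ 0 := by positivity
  rw [div_eq_mul_inv, ← zpow_neg, ← zpow_add₀ hpne]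
  have h2 : ((p:ℚ)^2)⁻¹ = (p:ℚ) ^ (-2 : ℤ) := by
    rw [zpow_neg, zpow_two, sq]
  rw [h2]
  apply zpow_le_zpow_right₀ (le_of_lt hp1)
  have := aux_val_le p j hp3 hj
  omega

lemma aux_choose_eq (i m : ℕ) (h : i ≤ m) :
    (m + 1) * m.choose i = (m + 1).choose i * (m + 1 - i) := by
  have h1 := Nat.add_one_mul_choose_eq m (m - i)
  rw [Nat.choose_symm h] at h1
  have h2 : (m + 1).choose (m - i + 1) = (m + 1).choose i := by
    rw [show m - i + 1 = (m + 1) - i by omega, Nat.choose_symm (by omega)]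
  rw [h2] at h1
  rw [show m - i + 1 = m + 1 - i by omega] at h1
  simpa [Nat.succ_eq_add_one] using h1

lemma aux_term_eq (p i m : ℕ) (h : i ≤ m) :
    bernoulli i * ((m + 1).choose i : ℚ) * (p:ℚ) ^ (m + 1 - i) / ((m:ℚ) + 1)
      = bernoulli i * (m.choose i : ℚ) * ((p:ℚ) ^ (m + 1 - i) / ((m + 1 - i : ℕ) : ℚ)) := by
  have hN : ((m:ℚ) + 1) * (m.choose i : ℚ) = ((m + 1).choose i : ℚ) * ((m + 1 - i : ℕ) : ℚ) := by
    exact_mod_cast congrArg (Nat.cast (R := ℚ)) (aux_choose_eq i m h)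
  have d1 : ((m:ℚ) + 1) ≠ 0 := by positivity
  have d2 : ((m + 1 - i : ℕ) : ℚ) ≠ 0 := by
    have : 0 < m + 1 - i := by omega
    positivity
  have key : ((m + 1).choose i : ℚ) / ((m:ℚ) + 1) = (m.choose i : ℚ) / ((m + 1 - i : ℕ) : ℚ) := by
    rw [div_eq_div_iff d1 d2]
    linear_combination -hN
  calc bernoulli i * ((m + 1).choose i : ℚ) * (p:ℚ) ^ (m + 1 - i) / ((m:ℚ) + 1)
      = bernoulli i * (p:ℚ) ^ (m + 1 - i) * (((m + 1).choose i : ℚ) / ((m:ℚ) + 1)) := by ring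
    _ = bernoulli i * (p:ℚ) ^ (m + 1 - i) * ((m.choose i : ℚ) / ((m + 1 - i : ℕ) : ℚ)) := by
        rw [key]
    _ = bernoulli i * (m.choose i : ℚ) * ((p:ℚ) ^ (m + 1 - i) / ((m + 1 - i : ℕ) : ℚ)) := by ring

lemma aux_term_bound (p i m : ℕ) [hp : Fact p.Prime] (hp3 : 3 ≤ p) (h : i < m)
    (hB : padicNorm p (bernoulli i) ≤ p) :
    padicNorm p (bernoulli i * ((m + 1).choose i : ℚ) * (p:ℚ) ^ (m + 1 - i) / ((m:ℚ) + 1))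
      ≤ (p:ℚ)⁻¹ := by
  rw [aux_term_eq p i m (le_of_lt h), padicNorm.mul, padicNorm.mul]
  have h1 : padicNorm p ((m.choose i : ℚ)) ≤ 1 := padicNorm.of_nat _
  have h2 := aux_pow_div p (m + 1 - i) hp3 (by omega)
  have hp0 : (0:ℚ) < p := by positivity
  calc padicNorm p (bernoulli i) * padicNorm p ((m.choose i : ℚ))
        * padicNorm p ((p:ℚ) ^ (m + 1 - i) / ((m + 1 - i : ℕ) : ℚ))
      ≤ ((p:ℚ) * 1) * ((p:ℚ)^2)⁻¹ := by
        apply mul_le_mul _ h2 (padicNorm.nonneg _) (by positivity)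
        exact mul_le_mul hB h1 (padicNorm.nonneg _) (le_of_lt hp0)
    _ = (p:ℚ)⁻¹ := by field_simp

lemma aux_bernoulli_norm_le (p : ℕ) [hp : Fact p.Prime] (hp3 : 3 ≤ p) (m : ℕ) :
    padicNorm p (bernoulli m) ≤ p := by
  induction m using Nat.strong_induction_on with
  | _ m ih =>
    have hsum := sum_range_pow p m
    rw [Finset.sum_range_succ] at hsum
    have hfm : bernoulli m * ((m + 1).choose m : ℚ) * (p:ℚ) ^ (m + 1 - m) / ((m:ℚ) + 1)
        = (p:ℚ) * bernoulli m := by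
      rw [Nat.choose_succ_self_right, Nat.add_sub_cancel_left]
      have d1 : ((m:ℚ) + 1) ≠ 0 := by positivity
      push_cast
      field_simp
    rw [hfm] at hsum
    have hkey : (p:ℚ) * bernoulli m
        = (∑ k ∈ Finset.range p, (k:ℚ) ^ m)
          - ∑ i ∈ Finset.range m,
              bernoulli i * ((m + 1).choose i : ℚ) * (p:ℚ) ^ (m + 1 - i) / ((m:ℚ) + 1) := by
      linarith [hsum]
    have hS : padicNorm p (∑ k ∈ Finset.range p, (k:ℚ) ^ m) ≤ 1 := by
      have : (∑ k ∈ Finset.range p, (k:ℚ) ^ m) = ((∑ k ∈ Finset.range p, k ^ m : ℕ) : ℚ) := by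
        push_cast; ring
      rw [this]; exact padicNorm.of_nat _
    have hT : padicNorm p (∑ i ∈ Finset.range m,
        bernoulli i * ((m + 1).choose i : ℚ) * (p:ℚ) ^ (m + 1 - i) / ((m:ℚ) + 1)) ≤ (p:ℚ)⁻¹ := by
      apply padicNorm.sum_le' _ (by positivity)
      intro i hi
      exact aux_term_bound p i m hp3 (Finset.mem_range.mp hi) (ih i (Finset.mem_range.mp hi))
    have hPB : padicNorm p ((p:ℚ) * bernoulli m) ≤ 1 := by
      rw [hkey]
      refine le_trans padicNorm.sub (max_le hS (le_trans hT ?_))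
      rw [inv_le_one_iff₀]
      right; exact_mod_cast hp.out.one_le
    have hp1 : (1:ℚ) < p := by exact_mod_cast hp.out.one_lt
    rw [padicNorm.mul, padicNorm.padicNorm_p_of_prime] at hPB
    calc padicNorm p (bernoulli m) = ((p:ℚ)⁻¹ * padicNorm p (bernoulli m)) * p := by
          field_simp
      _ ≤ 1 * p := by
          apply mul_le_mul_of_nonneg_right hPB (by positivity)
      _ = p := one_mul _

lemma aux_psum (p k : ℕ) [hp : Fact p.Prime] (hk : 1 ≤ k) :
    p ∣ (∑ i ∈ Finset.range p, i ^ (k * (p - 1))) + 1 := by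
  have hp2 : 2 ≤ p := hp.out.two_le
  have hn : k * (p - 1) ≠ 0 := by
    have : 1 ≤ p - 1 := by omega
    positivity
  rw [← ZMod.natCast_eq_zero_iff _ p]
  push_cast
  have hsr := Finset.sum_range_succ' (fun i => ((i : ZMod p)) ^ (k * (p - 1))) (p - 1)
  rw [show p - 1 + 1 = p by omega] at hsr
  rw [hsr]
  have h0 : ((0 : ℕ) : ZMod p) ^ (k * (p - 1)) = 0 := by
    rw [Nat.cast_zero, zero_pow hn]
  push_cast at h0 ⊢
  rw [h0, add_zero]
  have h1 : ∀ i ∈ Finset.range (p - 1), ((i : ZMod p) + 1) ^ (k * (p - 1)) = 1 := by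
    intro i hi
    have hi' : i < p - 1 := Finset.mem_range.mp hi
    have hne : ((i : ZMod p) + 1) ≠ 0 := by
      have : (((i + 1 : ℕ)) : ZMod p) ≠ 0 := by
        rw [Ne, ZMod.natCast_eq_zero_iff]
        intro hdvd
        have := Nat.le_of_dvd (by omega) hdvd
        omega
      push_cast at this
      exact this
    rw [mul_comm, pow_mul, ZMod.pow_card_sub_one_eq_one hne, one_pow]
  rw [Finset.sum_congr rfl h1, Finset.sum_const, Finset.card_range, nsmul_eq_mul, mul_one]
  have : (((p - 1 : ℕ) + 1 : ℕ) : ZMod p) = 0 := by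
    rw [show (p - 1) + 1 = p by omega, ZMod.natCast_self]
  push_cast at this
  linear_combination this

lemma aux_bern_norm (p k : ℕ) [hp : Fact p.Prime] (hp3 : 3 ≤ p) (hk : 1 ≤ k) :
    padicNorm p (bernoulli (k * (p - 1))) = p := by
  set n := k * (p - 1) with hn
  have hn1 : 1 ≤ n := by
    have : 1 ≤ p - 1 := by omega
    calc 1 = 1 * 1 := by ring
      _ ≤ k * (p - 1) := Nat.mul_le_mul hk this
  -- as before
  have hsum := sum_range_pow p n
  rw [Finset.sum_range_succ] at hsum
  have hfm : bernoulli n * ((n + 1).choose n : ℚ) * (p:ℚ) ^ (n + 1 - n) / ((n:ℚ) + 1)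
      = (p:ℚ) * bernoulli n := by
    rw [Nat.choose_succ_self_right, Nat.add_sub_cancel_left]
    have d1 : ((n:ℚ) + 1) ≠ 0 := by positivity
    push_cast
    field_simp
  rw [hfm] at hsum
  have hkey : (p:ℚ) * bernoulli n + 1
      = ((∑ i ∈ Finset.range p, (i:ℚ) ^ n) + 1)
        - ∑ i ∈ Finset.range n,
            bernoulli i * ((n + 1).choose i : ℚ) * (p:ℚ) ^ (n + 1 - i) / ((n:ℚ) + 1) := by
    linarith [hsum]
  have hp1 : (1:ℚ) < p := by exact_mod_cast hp.out.one_lt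
  have hS : padicNorm p ((∑ i ∈ Finset.range p, (i:ℚ) ^ n) + 1) < 1 := by
    have hcast : (∑ i ∈ Finset.range p, (i:ℚ) ^ n) + 1
        = (((∑ i ∈ Finset.range p, i ^ n) + 1 : ℕ) : ℚ) := by push_cast; ring
    rw [hcast, padicNorm.nat_lt_one_iff]
    exact aux_psum p k hk
  have hT : padicNorm p (∑ i ∈ Finset.range n,
      bernoulli i * ((n + 1).choose i : ℚ) * (p:ℚ) ^ (n + 1 - i) / ((n:ℚ) + 1)) < 1 := by
    refine lt_of_le_of_lt (padicNorm.sum_le' (t := (p:ℚ)⁻¹) ?_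
      (inv_nonneg.mpr (by positivity))) ?_
    · intro i hi
      exact aux_term_bound p i n hp3 (Finset.mem_range.mp hi)
        (aux_bernoulli_norm_le p hp3 i)
    · rw [inv_lt_one_iff₀]; right; exact hp1
  have hPB1 : padicNorm p ((p:ℚ) * bernoulli n + 1) < 1 := by
    rw [hkey]
    exact lt_of_le_of_lt padicNorm.sub (max_lt hS hT)
  have hPB : padicNorm p ((p:ℚ) * bernoulli n) = 1 := by
    have hne : padicNorm p ((p:ℚ) * bernoulli n + 1) ≠ padicNorm p (-1 : ℚ) := by
      rw [padicNorm.neg, padicNorm.one]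
      exact ne_of_lt hPB1
    have := padicNorm.add_eq_max_of_ne hne
    rw [add_neg_cancel_right] at this
    rw [this, padicNorm.neg, padicNorm.one]
    rw [max_eq_right (le_of_lt hPB1)]
  rw [padicNorm.mul, padicNorm.padicNorm_p_of_prime] at hPB
  have hpne : (p:ℚ) ≠ 0 := by positivity
  field_simp at hPB
  exact hPB

/-- Let p be an odd prime and k ≥ 1.  Let N be the numerator of
B_{k(p−1)} / (2k(p−1)) in lowest terms, where B denotes the Bernoulli numbers.
Then p does not divide (2^{k(p−1)−1} − 1) · N. -/
theorem stmt6 (p k : ℕ) (hp : p.Prime) (hodd : Odd p) (hk : 1 ≤ k) :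
    ¬ ((p : ℤ) ∣
        ((2 : ℤ) ^ (k * (p - 1) - 1) - 1) *
          (bernoulli (k * (p - 1)) / (2 * k * (p - 1) : ℚ)).num) := by
  haveI hfact : Fact p.Prime := ⟨hp⟩
  have hp3 : 3 ≤ p := by
    rcases hodd with ⟨m, hm⟩
    have := hp.two_le
    omega
  have hn2 : 2 ≤ k * (p - 1) := by
    have h1 : 2 ≤ p - 1 := by omega
    calc 2 = 1 * 2 := by ring
      _ ≤ k * (p - 1) := Nat.mul_le_mul hk h1
  intro hdvd
  have hpZ : Prime (p : ℤ) := Int.prime_iff_natAbs_prime.mpr (by simpa using hp)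
  rcases hpZ.dvd_mul.mp hdvd with h | h
  · -- p ∣ 2^(n-1) - 1 : contradiction with Fermat
    have h2ne : (2 : ZMod p) ≠ 0 := by
      have : ((2:ℕ) : ZMod p) ≠ 0 := by
        rw [Ne, ZMod.natCast_eq_zero_iff]
        intro hd
        have := Nat.le_of_dvd (by norm_num) hd
        omega
      push_cast at this
      exact this
    have h0 : ((2 : ZMod p)) ^ (k * (p - 1) - 1) - 1 = 0 := by
      have := (ZMod.intCast_zmod_eq_zero_iff_dvd _ p).mpr h
      push_cast at this
      exact this
    have h0' : ((2 : ZMod p)) ^ (k * (p - 1) - 1) = 1 := by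
      linear_combination h0
    have hpow : (2 : ZMod p) ^ (k * (p - 1)) = 1 := by
      rw [mul_comm, pow_mul, ZMod.pow_card_sub_one_eq_one h2ne, one_pow]
    have h21 : (2 : ZMod p) = 1 := by
      calc (2 : ZMod p) = 2 ^ (k * (p - 1) - 1) * 2 := by rw [h0', one_mul]
        _ = 2 ^ (k * (p - 1) - 1 + 1) := by rw [pow_succ]
        _ = 2 ^ (k * (p - 1)) := by congr 1; omega
        _ = 1 := hpow
    have : (1 : ZMod p) = 0 := by linear_combination h21
    exact one_ne_zero this
  · -- p ∣ numerator : contradiction with norm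
    set Q : ℚ := bernoulli (k * (p - 1)) / (2 * k * (p - 1) : ℚ) with hQdef
    have hcastd : ((2 * k * (p - 1) : ℕ) : ℚ) = (2 * k * (p - 1) : ℚ) := by
      push_cast [Nat.cast_sub (show 1 ≤ p by omega)]
      ring
    have hdne : (2 * k * (p - 1) : ℚ) ≠ 0 := by
      rw [← hcastd]
      have : 0 < 2 * k * (p - 1) := by
        have : 1 ≤ p - 1 := by omega
        positivity
      positivity
    have hdnorm : padicNorm p ((2 * k * (p - 1) : ℚ)) ≤ 1 := by
      rw [← hcastd]; exact padicNorm.of_nat _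
    have hdpos : 0 < padicNorm p ((2 * k * (p - 1) : ℚ)) :=
      lt_of_le_of_ne (padicNorm.nonneg _) (Ne.symm (padicNorm.nonzero hdne))
    have hp1 : (1:ℚ) < p := by exact_mod_cast hp.one_lt
    have hQnorm : (p : ℚ) ≤ padicNorm p Q := by
      rw [hQdef, padicNorm.div, aux_bern_norm p k hp3 hk]
      rw [le_div_iff₀ hdpos]
      exact mul_le_of_le_one_right (by positivity) hdnorm
    -- but from p ∣ Q.num we get padicNorm p Q < 1
    have hpden : ¬ (p ∣ Q.den) := by
      intro hd
      have h1 : p ∣ Q.num.natAbs := by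
        have := Int.natAbs_dvd_natAbs.mpr h
        simpa using this
      have := Nat.dvd_gcd h1 hd
      rw [Nat.Coprime.gcd_eq_one Q.reduced] at this
      have := Nat.le_of_dvd one_pos this
      omega
    have hQlt : padicNorm p Q < 1 := by
      conv_lhs => rw [show Q = (Q.num : ℚ) / (Q.den : ℚ) from (Rat.num_div_den Q).symm]
      rw [padicNorm.div, (padicNorm.nat_eq_one_iff (p := p) Q.den).mpr hpden, div_one]
      exact (padicNorm.int_lt_one_iff _).mpr h
    linarith
end

section
/- Let p be a prime and let m, N be natural numbers. Let G and H be finite cyclic groups, each of order p^m, and let e : G → H be a bijection of the underlying sets. Suppose G ⊇ F₀ ⊇ F₁ ⊇ ⋯ ⊇ F_N is a decreasing chain of subsets of G with F₀ = G and F_N = {1}, such that: each F_i is the underlying set of a subgroup of G; each image e(F_i) is the underlying set of a subgroup of H; and for each i the index of F_{i+1} in F_i (as subgroups of G) is either 1 or p. Then for every x ∈ G, the order of x in G equals the order of e(x) in H. -/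
lemma cyclic_subgroup_carrier_eq {G : Type*} [Group G] [Finite G] [IsCyclic G]
    (K : Subgroup G) : (K : Set G) = {x : G | x ^ Nat.card K = 1} := by
  classical
  cases nonempty_fintype G
  have hpos : 0 < Nat.card K := Nat.card_pos
  have hsub : (K : Set G) ⊆ {x : G | x ^ Nat.card K = 1} := by
    intro x hx
    show x ^ Nat.card K = 1
    have h : ((⟨x, hx⟩ : K) ^ Nat.card K : K) = 1 := pow_card_eq_one'
    rw [Subtype.ext_iff, SubmonoidClass.coe_pow] at h
    exact h
  refine Set.eq_of_subset_of_ncard_le hsub ?_ (Set.toFinite _)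
  have h1 : ({x : G | x ^ Nat.card K = 1} : Set G).ncard ≤ Nat.card K := by
    have := IsCyclic.card_pow_eq_one_le (α := G) hpos
    rw [Set.ncard_eq_toFinset_card']
    convert this using 2
    ext x
    simp
  have h2 : ((K : Set G)).ncard = Nat.card K := by
    rw [← Nat.card_coe_set_eq]; rfl
  omega



/-- Let p be a prime, G and H finite cyclic groups of order p^m,
and e : G → H a bijection.  Suppose F 0 ⊇ F 1 ⊇ ⋯ ⊇ F N is a decreasing chain
of subsets of G with F 0 = G and F N = {1}, each F i the carrier of a subgroup
of G, each image e '' F i the carrier of a subgroup of H, and each index of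
F (i+1) in F i equal to 1 or p.  Then orderOf (e x) = orderOf x for all x. -/
theorem stmt7 (p m N : ℕ) (hp : p.Prime)
    (G H : Type*) [Group G] [Group H] [Finite G] [Finite H]
    [IsCyclic G] [IsCyclic H]
    (hG : Nat.card G = p ^ m) (hH : Nat.card H = p ^ m)
    (e : G → H) (he : Function.Bijective e)
    (F : ℕ → Set G)
    (hchain : ∀ i < N, F (i + 1) ⊆ F i)
    (hF0 : F 0 = Set.univ) (hFN : F N = {1})
    (hsubG : ∀ i ≤ N, ∃ S : Subgroup G, (S : Set G) = F i)
    (hsubH : ∀ i ≤ N, ∃ T : Subgroup H, (T : Set H) = e '' F i)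
    (hindex : ∀ i < N,
      Nat.card (F i) = Nat.card (F (i + 1)) ∨
        Nat.card (F i) = p * Nat.card (F (i + 1))) :
    ∀ x : G, orderOf (e x) = orderOf x := by
  classical
  -- each level has p-power cardinality
  have hpow : ∀ i ≤ N, ∃ t, t ≤ m ∧ Nat.card (F i) = p ^ t := by
    intro i hi
    obtain ⟨S, hS⟩ := hsubG i hi
    have hcard : Nat.card (F i) = Nat.card S := by rw [← hS]; rfl
    have hdvd : Nat.card S ∣ p ^ m := by
      rw [← hG]; exact Subgroup.card_subgroup_dvd_card S
    obtain ⟨t, ht, heq⟩ := (Nat.dvd_prime_pow hp).mp hdvd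
    exact ⟨t, ht, by rw [hcard, heq]⟩
  -- every power p^t with t ≤ m appears as some Nat.card (F i)
  have hexists : ∀ t ≤ m, ∃ i ≤ N, Nat.card (F i) = p ^ t := by
    intro t ht
    have key : ∀ k i, i + k = N → p ^ t ≤ Nat.card (F i) →
        ∃ j ≤ N, Nat.card (F j) = p ^ t := by
      intro k
      induction k with
      | zero =>
        intro i hi hle
        simp only [Nat.add_zero] at hi
        subst hi
        have h1 : Nat.card (F i) = 1 := by
          rw [hFN]; simp
        have : p ^ t = 1 := le_antisymm (h1 ▸ hle) (Nat.one_le_pow _ _ hp.pos)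
        exact ⟨i, le_refl _, by omega⟩
      | succ k ih =>
        intro i hi hle
        have hiN : i ≤ N := by omega
        by_cases hcase : Nat.card (F i) = p ^ t
        · exact ⟨i, hiN, hcase⟩
        · obtain ⟨s, hs, hseq⟩ := hpow i hiN
          obtain ⟨s', hs', hseq'⟩ := hpow (i + 1) (by omega)
          have hts : t < s := by
            rw [hseq] at hle hcase
            by_contra hc
            push_neg at hc
            exact hcase (le_antisymm (Nat.pow_le_pow_right hp.pos (by omega)) hle)
          have hnext : p ^ t ≤ Nat.card (F (i + 1)) := by
            rcases hindex i (by omega) with h | h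
            · omega
            · rw [hseq, hseq'] at h
              have : p ^ s = p ^ (s' + 1) := by rw [h, pow_succ, mul_comm]
              have hss : s = s' + 1 := Nat.pow_right_injective hp.two_le this
              rw [hseq']
              exact Nat.pow_le_pow_right hp.pos (by omega)
          exact ih (i + 1) (by omega) hnext
    apply key N 0 (by omega)
    have : Nat.card (F 0) = p ^ m := by
      rw [hF0]
      simpa [Nat.card_coe_set_eq, Set.ncard_univ] using hG
    rw [this]
    exact Nat.pow_le_pow_right hp.pos ht
  -- membership characterization
  have key2 : ∀ t ≤ m, ∀ x : G, (x ^ p ^ t = 1 ↔ (e x) ^ p ^ t = 1) := by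
    intro t ht x
    obtain ⟨i, hi, hci⟩ := hexists t ht
    obtain ⟨S, hS⟩ := hsubG i hi
    obtain ⟨T, hT⟩ := hsubH i hi
    have hcS : Nat.card S = p ^ t := by
      rw [← hci, ← hS]; rfl
    have hcT : Nat.card T = p ^ t := by
      have : Nat.card (e '' F i) = Nat.card (F i) :=
        Nat.card_image_of_injective he.1 _
      rw [← hci, ← this, ← hT]; rfl
    have h1 : x ∈ F i ↔ x ^ p ^ t = 1 := by
      rw [← hS, cyclic_subgroup_carrier_eq S, hcS]; rfl
    have h2 : e x ∈ e '' F i ↔ (e x) ^ p ^ t = 1 := by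
      rw [← hT, cyclic_subgroup_carrier_eq T, hcT]; rfl
    have h3 : e x ∈ e '' F i ↔ x ∈ F i := he.1.mem_set_image
    rw [← h1, ← h3, h2]
  -- conclude
  intro x
  have hx : orderOf x ∣ p ^ m := hG ▸ orderOf_dvd_natCard x
  have hex : orderOf (e x) ∣ p ^ m := hH ▸ orderOf_dvd_natCard (e x)
  obtain ⟨a, ha, haq⟩ := (Nat.dvd_prime_pow hp).mp hx
  obtain ⟨b, hb, hbq⟩ := (Nat.dvd_prime_pow hp).mp hex
  have hab : orderOf x ∣ p ^ b := by
    rw [orderOf_dvd_iff_pow_eq_one, key2 b hb, ← hbq]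
    exact pow_orderOf_eq_one _
  have hba : orderOf (e x) ∣ p ^ a := by
    rw [orderOf_dvd_iff_pow_eq_one, ← key2 a ha, ← haq]
    exact pow_orderOf_eq_one _
  rw [haq] at hab
  rw [hbq] at hba
  rw [haq, hbq]
  exact Nat.dvd_antisymm hba hab
end

section
/- Let p be a prime, let ℤ_p denote the additive group of p-adic integers, and let e : ℤ_p → ℤ_p be a bijection of the underlying set. Suppose F₀ ⊇ F₁ ⊇ F₂ ⊇ ⋯ is a decreasing sequence of additive subgroups of ℤ_p with F₀ = ℤ_p and ⋂_n F_n = {0}, such that for each n the subgroup F_{n+1} has finite index at most p in F_n; and suppose that each image e(F_n) is the underlying set of an additive subgroup of ℤ_p and that for each n the subgroup e(F_{n+1}) has finite index at most p in e(F_n). Then for every x ∈ ℤ_p and every natural number r, p^r divides x in ℤ_p if and only if p^r divides e(x) in ℤ_p. -/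
section Aux

variable {p : ℕ} [hp : Fact p.Prime]

/-- The additive subgroup `p^r ℤ_p` of `ℤ_p`. -/
def pSub (p : ℕ) [Fact p.Prime] (r : ℕ) : AddSubgroup ℤ_[p] where
  carrier := {x | (p : ℤ_[p]) ^ r ∣ x}
  zero_mem' := dvd_zero _
  add_mem' := fun ha hb => dvd_add ha hb
  neg_mem' := fun ha => dvd_neg.2 ha

lemma mem_pSub {r : ℕ} {x : ℤ_[p]} : x ∈ pSub p r ↔ (p : ℤ_[p]) ^ r ∣ x := Iff.rfl

lemma pCast_ne_zero : (p : ℤ_[p]) ≠ 0 := Nat.cast_ne_zero.2 hp.out.ne_zero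

lemma pCast_not_unit : ¬ IsUnit (p : ℤ_[p]) := by
  rw [PadicInt.isUnit_iff, PadicInt.norm_p]
  have h1 : (1 : ℝ) < p := by exact_mod_cast hp.out.one_lt
  intro h
  have : (p : ℝ)⁻¹ < 1 := inv_lt_one_of_one_lt₀ h1
  linarith

lemma pSub_zero : pSub p 0 = ⊤ := by
  ext x; simp [mem_pSub]

lemma pSub_antitone {r s : ℕ} (h : r ≤ s) : pSub p s ≤ pSub p r :=
  fun _ hx => dvd_trans (pow_dvd_pow _ h) hx

lemma pSub_le_iff {r s : ℕ} : pSub p s ≤ pSub p r ↔ r ≤ s := by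
  refine ⟨fun h => ?_, pSub_antitone⟩
  have := h (show (p : ℤ_[p]) ^ s ∈ pSub p s from dvd_refl _)
  exact (pow_dvd_pow_iff pCast_ne_zero pCast_not_unit).1 this

lemma pSub_injective : Function.Injective (pSub p) := fun r s h => by
  have h1 : r ≤ s := pSub_le_iff.1 h.ge
  have h2 : s ≤ r := pSub_le_iff.1 h.le
  omega

lemma pSub_eq_ker (r : ℕ) :
    pSub p r = AddMonoidHom.ker (PadicInt.toZModPow r).toAddMonoidHom := by
  ext x
  rw [mem_pSub, AddMonoidHom.mem_ker]
  have : (PadicInt.toZModPow (p := p) r) x = 0 ↔ x ∈ RingHom.ker (PadicInt.toZModPow (p := p) r) :=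
    Iff.rfl
  rw [show ((PadicInt.toZModPow r).toAddMonoidHom x = 0) ↔ (PadicInt.toZModPow (p := p) r) x = 0
    from Iff.rfl, this, PadicInt.ker_toZModPow, Ideal.mem_span_singleton]

lemma pSub_index (r : ℕ) : (pSub p r).index = p ^ r := by
  haveI : NeZero (p ^ r) := ⟨pow_ne_zero _ hp.out.ne_zero⟩
  rw [pSub_eq_ker, AddSubgroup.index_ker]
  have hsurj : Function.Surjective (PadicInt.toZModPow (p := p) r).toAddMonoidHom := by
    intro a
    refine ⟨((a.val : ℕ) : ℤ_[p]), ?_⟩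
    show (PadicInt.toZModPow r) ((a.val : ℕ) : ℤ_[p]) = a
    rw [map_natCast, ZMod.natCast_val, ZMod.cast_id]
  rw [AddMonoidHom.range_eq_top.2 hsurj]
  have htop : Nat.card ((⊤ : AddSubgroup (ZMod (p ^ r)))) = Nat.card (ZMod (p ^ r)) :=
    Nat.card_congr AddSubgroup.topEquiv.toEquiv
  rw [htop, Nat.card_zmod]

/-- Key step: if `H` contains `p^c ℤ_p` and an element of the form `p^v u` with `u` a unit,
then `H` contains `p^v ℤ_p`. -/
lemma pSub_le_of_mem_unit (H : AddSubgroup ℤ_[p]) (c v : ℕ) (hc : pSub p c ≤ H)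
    (x0 : ℤ_[p]) (hx0 : x0 ∈ H) (u : ℤ_[p]ˣ) (hxu : x0 = (p : ℤ_[p]) ^ v * u) :
    pSub p v ≤ H := by
  intro y hy
  obtain ⟨z, rfl⟩ := mem_pSub.1 hy
  set w : ℤ_[p] := (↑u⁻¹ : ℤ_[p]) * z with hw
  set n : ℕ := w.appr (c - v) with hn
  have h1 : (p : ℤ_[p]) ^ (c - v) ∣ w - n := by
    have := PadicInt.appr_spec (c - v) w
    rwa [Ideal.mem_span_singleton] at this
  have key : (p : ℤ_[p]) ^ v * z - n • x0 ∈ pSub p c := by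
    rw [mem_pSub]
    have hz : (↑u : ℤ_[p]) * w = z := by
      rw [hw, ← mul_assoc, Units.mul_inv, one_mul]
    have : (p : ℤ_[p]) ^ v * z - n • x0 = (p : ℤ_[p]) ^ v * (↑u : ℤ_[p]) * (w - n) := by
      rw [nsmul_eq_mul, hxu, ← hz]
      ring
    rw [this]
    obtain ⟨t, ht⟩ := h1
    refine ⟨(↑u : ℤ_[p]) * t * (p : ℤ_[p]) ^ (v + (c - v) - c), ?_⟩
    rw [ht]
    have hpow : (p : ℤ_[p]) ^ v * (p : ℤ_[p]) ^ (c - v) =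
        (p : ℤ_[p]) ^ c * (p : ℤ_[p]) ^ (v + (c - v) - c) := by
      rw [← pow_add, ← pow_add]
      congr 1
      omega
    calc (p : ℤ_[p]) ^ v * (↑u : ℤ_[p]) * ((p : ℤ_[p]) ^ (c - v) * t)
        = ((p : ℤ_[p]) ^ v * (p : ℤ_[p]) ^ (c - v)) * ((↑u : ℤ_[p]) * t) := by ring
      _ = (p : ℤ_[p]) ^ c * ((↑u : ℤ_[p]) * t * (p : ℤ_[p]) ^ (v + (c - v) - c)) := by
          rw [hpow]; ring
  have := H.add_mem (hc key) (AddSubgroup.nsmul_mem H hx0 n)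
  simpa using this

lemma isUnit_of_not_p_dvd {z : ℤ_[p]} (h : ¬ (p : ℤ_[p]) ∣ z) : IsUnit z := by
  by_contra hz
  apply h
  have : z ∈ IsLocalRing.maximalIdeal ℤ_[p] := hz
  rwa [PadicInt.maximalIdeal_eq_span_p, Ideal.mem_span_singleton] at this

/-- Every finite-index additive subgroup of `ℤ_p` is `p^b ℤ_p` for some `b`. -/
lemma exists_pSub_eq (H : AddSubgroup ℤ_[p]) (hH : H.index ≠ 0) : ∃ b, H = pSub p b := by
  classical
  -- H contains p^a ℤ_p where a is the p-adic valuation of the index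
  set m := H.index with hm
  set a := m.factorization p with ha
  have hma : m = p ^ a * (m / p ^ a) := (Nat.ordProj_mul_ordCompl_eq_self m p).symm
  have hndvd : ¬ p ∣ (m / p ^ a) := Nat.not_dvd_ordCompl hp.out hH
  have hu : IsUnit ((m / p ^ a : ℕ) : ℤ_[p]) := by
    apply isUnit_of_not_p_dvd
    intro hdvd
    apply hndvd
    have h2 : ‖((m / p ^ a : ℕ) : ℤ_[p])‖ < 1 := PadicInt.norm_lt_one_iff_dvd _ |>.2 hdvd
    have h3 : ((p : ℤ)) ∣ ((m / p ^ a : ℕ) : ℤ) := by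
      rw [← PadicInt.norm_int_lt_one_iff_dvd]
      exact_mod_cast h2
    exact_mod_cast h3
  obtain ⟨u, huu⟩ := hu
  have hcle : pSub p a ≤ H := by
    intro x hx
    obtain ⟨y, rfl⟩ := mem_pSub.1 hx
    have hmem : m • ((↑u⁻¹ : ℤ_[p]) * y) ∈ H := AddSubgroup.nsmul_index_mem H _
    have : m • ((↑u⁻¹ : ℤ_[p]) * y) = (p : ℤ_[p]) ^ a * y := by
      rw [nsmul_eq_mul]
      have hmcast : ((m : ℕ) : ℤ_[p]) = (p : ℤ_[p]) ^ a * (↑u : ℤ_[p]) := by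
        conv_lhs => rw [hma]
        push_cast
        rw [huu]
      rw [hmcast]
      calc (p : ℤ_[p]) ^ a * (↑u : ℤ_[p]) * ((↑u⁻¹ : ℤ_[p]) * y)
          = (p : ℤ_[p]) ^ a * ((↑u : ℤ_[p]) * (↑u⁻¹ : ℤ_[p])) * y := by ring
        _ = (p : ℤ_[p]) ^ a * y := by rw [Units.mul_inv, mul_one]
    rwa [this] at hmem
  -- take minimal b with pSub b ≤ H
  have hex : ∃ k, pSub p k ≤ H := ⟨a, hcle⟩
  set b := Nat.find hex with hb
  have hble : pSub p b ≤ H := Nat.find_spec hex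
  refine ⟨b, le_antisymm ?_ hble⟩
  by_contra hcon
  rw [SetLike.not_le_iff_exists] at hcon
  obtain ⟨x, hxH, hxb⟩ := hcon
  have hxne : x ≠ 0 := by
    rintro rfl
    exact hxb (mem_pSub.2 (dvd_zero _))
  -- x = p^v * unit with v < b
  have hexv : ∃ k, ¬ (p : ℤ_[p]) ^ k ∣ x := ⟨b, fun h => hxb (mem_pSub.2 h)⟩
  set m0 := Nat.find hexv with hm0
  have hm0le : m0 ≤ b := Nat.find_min' hexv (fun h => hxb (mem_pSub.2 h))
  have hm0pos : 0 < m0 := by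
    rcases Nat.eq_zero_or_pos m0 with h | h
    · exfalso
      have hs := Nat.find_spec hexv
      rw [← hm0, h] at hs
      exact hs (by simp)
    · exact h
  set v := m0 - 1 with hv
  have hvdvd : (p : ℤ_[p]) ^ v ∣ x := by
    by_contra h
    exact absurd (Nat.find_min' hexv h) (by omega)
  have hvnot : ¬ (p : ℤ_[p]) ^ (v + 1) ∣ x := by
    have : v + 1 = m0 := by omega
    rw [this]; exact Nat.find_spec hexv
  obtain ⟨z, hxz⟩ := hvdvd
  have hzu : IsUnit z := by
    apply isUnit_of_not_p_dvd
    intro ⟨t, ht⟩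
    exact hvnot ⟨t, by rw [hxz, ht, pow_succ]; ring⟩
  obtain ⟨u0, hu0⟩ := hzu
  have hle : pSub p v ≤ H :=
    pSub_le_of_mem_unit H b v hble x hxH u0 (by rw [hxz, hu0])
  have : b ≤ v := Nat.find_min' hex hle
  omega

end Aux

/-- Let p be a prime, e : ℤ_p → ℤ_p a bijection of the p-adic
integers, and F 0 ⊇ F 1 ⊇ ⋯ a decreasing sequence of additive subgroups of
ℤ_p with F 0 = ℤ_p and ⋂ F n = {0}, each F (n+1) of finite index at most p in
F n.  Suppose each image e '' F n is the carrier of an additive subgroup E n,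
and each E (n+1) has finite index at most p in E n.  Then for every x and
every r, p^r ∣ x in ℤ_p if and only if p^r ∣ e x. -/
theorem stmt8 (p : ℕ) [Fact p.Prime]
    (e : ℤ_[p] → ℤ_[p]) (he : Function.Bijective e)
    (F E : ℕ → AddSubgroup ℤ_[p])
    (hF0 : F 0 = ⊤) (hFinf : (⨅ n, F n) = ⊥)
    (hchain : ∀ n, F (n + 1) ≤ F n)
    (hFidx : ∀ n, (F (n + 1)).relIndex (F n) ≠ 0 ∧ (F (n + 1)).relIndex (F n) ≤ p)
    (hE : ∀ n, (E n : Set ℤ_[p]) = e '' (F n : Set ℤ_[p]))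
    (hEidx : ∀ n, (E (n + 1)).relIndex (E n) ≠ 0 ∧ (E (n + 1)).relIndex (E n) ≤ p) :
    ∀ (x : ℤ_[p]) (r : ℕ), ((p : ℤ_[p]) ^ r ∣ x ↔ (p : ℤ_[p]) ^ r ∣ e x) := by
  classical
  have hp : Fact p.Prime := inferInstance
  have heinj := he.injective
  -- E basics
  have hE0 : E 0 = ⊤ := by
    ext x
    simp only [AddSubgroup.mem_top, iff_true]
    have : x ∈ (E 0 : Set ℤ_[p]) ↔ x ∈ e '' (F 0 : Set ℤ_[p]) := by rw [hE 0]
    rw [show (x ∈ E 0) ↔ x ∈ (E 0 : Set ℤ_[p]) from Iff.rfl, this]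
    obtain ⟨y, hy⟩ := he.surjective x
    exact ⟨y, by simp [hF0], hy⟩
  have hEchain : ∀ n, E (n + 1) ≤ E n := by
    intro n x hx
    have : x ∈ (E (n + 1) : Set ℤ_[p]) := hx
    rw [hE (n + 1)] at this
    obtain ⟨y, hy, rfl⟩ := this
    have : e y ∈ e '' (F n : Set ℤ_[p]) := ⟨y, hchain n hy, rfl⟩
    rw [← hE n] at this
    exact this
  -- finite indices
  have hFidx' : ∀ n, (F n).index ≠ 0 := by
    intro n
    induction n with
    | zero => rw [hF0, AddSubgroup.index_top]; exact one_ne_zero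
    | succ k ih =>
      have := AddSubgroup.relIndex_mul_index (hchain k)
      rw [← this]
      exact mul_ne_zero (hFidx k).1 ih
  have hEidx' : ∀ n, (E n).index ≠ 0 := by
    intro n
    induction n with
    | zero => rw [hE0, AddSubgroup.index_top]; exact one_ne_zero
    | succ k ih =>
      have := AddSubgroup.relIndex_mul_index (hEchain k)
      rw [← this]
      exact mul_ne_zero (hEidx k).1 ih
  -- exponents
  choose b hb using fun n => exists_pSub_eq (F n) (hFidx' n)
  choose c hc using fun n => exists_pSub_eq (E n) (hEidx' n)
  have hb0 : b 0 = 0 := pSub_injective (p := p) (by rw [← hb 0, hF0, pSub_zero])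
  have hc0 : c 0 = 0 := pSub_injective (p := p) (by rw [← hc 0, hE0, pSub_zero])
  have hbmono : ∀ n, b n ≤ b (n + 1) := by
    intro n
    apply (pSub_le_iff (p := p)).1
    rw [← hb n, ← hb (n + 1)]
    exact hchain n
  have hcmono : ∀ n, c n ≤ c (n + 1) := by
    intro n
    apply (pSub_le_iff (p := p)).1
    rw [← hc n, ← hc (n + 1)]
    exact hEchain n
  -- step bounds
  have hstep : ∀ (G : ℕ → AddSubgroup ℤ_[p]) (d : ℕ → ℕ),
      (∀ n, G n = pSub p (d n)) → (∀ n, G (n + 1) ≤ G n) →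
      (∀ n, (G (n + 1)).relIndex (G n) ≤ p) → (∀ n, d n ≤ d (n + 1)) →
      ∀ n, d (n + 1) ≤ d n + 1 := by
    intro G d hd hch hrel hmono n
    have h1 : (G (n + 1)).relIndex (G n) * (G n).index = (G (n + 1)).index :=
      AddSubgroup.relIndex_mul_index (hch n)
    have hIn : (G n).index = p ^ d n := by rw [hd n, pSub_index]
    have hIn1 : (G (n + 1)).index = p ^ d (n + 1) := by rw [hd (n + 1), pSub_index]
    rw [hIn, hIn1] at h1
    have hmn := hmono n
    have hsplit : p ^ d (n + 1) = p ^ (d (n + 1) - d n) * p ^ d n := by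
      rw [← pow_add]; congr 1; omega
    rw [hsplit] at h1
    have hpn : p ^ d n ≠ 0 := pow_ne_zero _ hp.out.ne_zero
    have h2 : (G (n + 1)).relIndex (G n) = p ^ (d (n + 1) - d n) :=
      Nat.eq_of_mul_eq_mul_right (Nat.pos_of_ne_zero hpn) h1
    have h3 : p ^ (d (n + 1) - d n) ≤ p ^ 1 := by
      rw [← h2, pow_one]; exact hrel n
    have h4 : d (n + 1) - d n ≤ 1 := (Nat.pow_le_pow_iff_right hp.out.one_lt).1 h3
    have h5 := hmono n
    omega
  have hbstep : ∀ n, b (n + 1) ≤ b n + 1 :=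
    hstep F b hb hchain (fun n => (hFidx n).2) hbmono
  have hcstep : ∀ n, c (n + 1) ≤ c n + 1 :=
    hstep E c hc hEchain (fun n => (hEidx n).2) hcmono
  -- F equal iff E equal
  have hFE : ∀ n, (F (n + 1) = F n ↔ E (n + 1) = E n) := by
    intro n
    constructor
    · intro h
      apply SetLike.coe_injective
      rw [hE (n + 1), hE n, h]
    · intro h
      apply SetLike.coe_injective
      have h2 : e '' (F (n + 1) : Set ℤ_[p]) = e '' (F n : Set ℤ_[p]) := by
        rw [← hE (n + 1), ← hE n, h]
      exact Set.image_injective.2 heinj h2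
  -- b = c
  have hbc : ∀ n, b n = c n := by
    intro n
    induction n with
    | zero => rw [hb0, hc0]
    | succ k ih =>
      by_cases hcase : b (k + 1) = b k
      · have hFeq : F (k + 1) = F k := by rw [hb (k + 1), hb k, hcase]
        have hEeq : E (k + 1) = E k := (hFE k).1 hFeq
        have : c (k + 1) = c k := pSub_injective (p := p) (by rw [← hc (k + 1), ← hc k, hEeq])
        omega
      · have hFne : F (k + 1) ≠ F k := fun h => by
          apply hcase
          apply pSub_injective (p := p)
          rw [← hb (k + 1), ← hb k, h]
        have hEne : E (k + 1) ≠ E k := fun h => hFne ((hFE k).2 h)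
        have hcne : c (k + 1) ≠ c k := fun h => by
          apply hEne
          rw [hc (k + 1), hc k, h]
        have := hbmono k; have := hbstep k; have := hcmono k; have := hcstep k
        omega
  -- unboundedness of b
  have hunb : ∀ r, ∃ n, r ≤ b n := by
    intro r
    by_contra hcon
    push_neg at hcon
    have hle : pSub p r ≤ ⨅ n, F n := by
      apply le_iInf
      intro n
      rw [hb n]
      exact pSub_antitone (le_of_lt (hcon n))
    rw [hFinf] at hle
    have : (p : ℤ_[p]) ^ r ∈ (⊥ : AddSubgroup ℤ_[p]) := hle (mem_pSub.2 (dvd_refl _))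
    rw [AddSubgroup.mem_bot] at this
    exact pow_ne_zero r pCast_ne_zero this
  -- b hits every value
  have hhit : ∀ r, ∃ n, b n = r := by
    intro r
    rcases Nat.eq_zero_or_pos r with hr | hr
    · exact ⟨0, by rw [hb0, hr]⟩
    · have hspec := Nat.find_spec (hunb r)
      cases' hn0 : Nat.find (hunb r) with m
      · rw [hn0] at hspec
        rw [hb0] at hspec
        omega
      · refine ⟨m + 1, ?_⟩
        rw [hn0] at hspec
        have hm : ¬ r ≤ b m := Nat.find_min (hunb r) (by omega)
        have := hbstep m
        omega
  -- conclusion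
  intro x r
  obtain ⟨n, hn⟩ := hhit r
  have hFx : (p : ℤ_[p]) ^ r ∣ x ↔ x ∈ F n := by
    rw [hb n, ← hn]; exact Iff.rfl
  have hEx : (p : ℤ_[p]) ^ r ∣ e x ↔ e x ∈ E n := by
    rw [hc n, ← hbc n, ← hn]; exact Iff.rfl
  rw [hFx, hEx]
  constructor
  · intro h
    have : e x ∈ (E n : Set ℤ_[p]) := by rw [hE n]; exact ⟨x, h, rfl⟩
    exact this
  · intro h
    have : e x ∈ e '' (F n : Set ℤ_[p]) := by rw [← hE n]; exact h
    obtain ⟨y, hy, hey⟩ := this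
    rwa [← heinj hey]
end
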